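/- For all σ ∈ [0,1] and all real γ with γ² ≥ 6, the polynomial expression 2(3 - 2σ)σ⁴ + 4γ²σ²(2σ - 9) + 6γ⁴(1 + 2σ) is strictly positive. -/
import Mathlib


theorem positivity_lemma_n_eq_two (σ γ : ℝ) (hσ : σ ∈ Set.Icc (0 : ℝ) 1)
    (hγ : 6 ≤ γ ^ 2) :
    0 < 2 * (3 - 2 * σ) * σ ^ 4 + 4 * γ ^ 2 * σ ^ 2 * (2 * σ - 9)
        + 6 * γ ^ 4 * (1 + 2 * σ) := by
  obtain ⟨h0, h1⟩ := hσ
  nlinarith [sq_nonneg (γ^2 - 6), sq_nonneg σ, sq_nonneg (1 - σ), sq_nonneg (γ^2 - σ^2),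
    mul_nonneg h0 (sub_nonneg.2 h1), sq_nonneg (γ^2 - 3*σ^2), sq_nonneg (σ*(1-σ)),
    mul_nonneg (mul_nonneg h0 h0) (sub_nonneg.2 h1)]
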